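/- For every n ≥ 1, the Hochschild boundary intertwines the signed star-reversal operators: b ∘ T_n = T_{n−1} ∘ b as k-linear maps C_n(A) → C_{n−1}(A). (This is the paper's lemma that the differential of the involutive Hochschild chain complex preserves the involution, stated for a unital star algebra, i.e. an involutive DG category with one object concentrated in degree zero.) -/

import Mathlib

/-!
Statement 0: For a unital star algebra `A` over a commutative ring `k`, the Hochschild
boundary intertwines the signed star-reversal operators: `b ∘ T_n = T_{n-1} ∘ b`
as `k`-linear maps `C_n(A) → C_{n-1}(A)`, for every `n ≥ 1` (here `n = m + 1`).
-/

/-- The `n`-th Hochschild chain module `C_n(A) = A^{⊗(n+1)}` (tensor product over `k`). -/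
abbrev HochschildChains (k A : Type*) [CommRing k] [Ring A] [Algebra k A] (n : ℕ) :=
  PiTensorProduct k (fun _ : Fin (n + 1) => A)

/-- The `i`-th face of the Hochschild boundary on an elementary tensor
`a₀ ⊗ ⋯ ⊗ a_{n+1}`: multiply the entries in slots `i` and `i+1`. -/
def hochFace {A : Type*} [Mul A] (n : ℕ) (i : Fin (n + 1)) (a : Fin (n + 2) → A) :
    Fin (n + 1) → A := fun j =>
  if (j : ℕ) < (i : ℕ) then a j.castSucc
  else if (j : ℕ) = (i : ℕ) then a j.castSucc * a j.succ
  else a j.succ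

/-- The last (cyclic) face of the Hochschild boundary on an elementary tensor:
`(a_{n+1} a₀) ⊗ a₁ ⊗ ⋯ ⊗ a_n`. -/
def hochCyc {A : Type*} [Mul A] (n : ℕ) (a : Fin (n + 2) → A) : Fin (n + 1) → A := fun j =>
  if j = 0 then a (Fin.last (n + 1)) * a 0 else a j.castSucc

/-- `b : C_{n+1}(A) → C_n(A)` is the Hochschild boundary, i.e. the `k`-linear map
determined on elementary tensors by
`b(a₀⊗⋯⊗a_{n+1}) = Σ_{i=0}^{n} (−1)^i a₀⊗⋯⊗(a_i a_{i+1})⊗⋯⊗a_{n+1}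
  + (−1)^{n+1} (a_{n+1} a₀)⊗a₁⊗⋯⊗a_n`. -/
def IsHochschildBoundary (k : Type*) {A : Type*} [CommRing k] [Ring A] [Algebra k A] (n : ℕ)
    (b : HochschildChains k A (n + 1) →ₗ[k] HochschildChains k A n) : Prop :=
  ∀ a : Fin (n + 2) → A,
    b (PiTensorProduct.tprod k a) =
      (∑ i : Fin (n + 1), ((-1 : ℤ) ^ (i : ℕ)) • PiTensorProduct.tprod k (hochFace n i a))
        + ((-1 : ℤ) ^ (n + 1)) • PiTensorProduct.tprod k (hochCyc n a)

/-- `T : C_n(A) → C_n(A)` is the signed star-reversal operator, i.e. the `k`-linear map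
determined on elementary tensors by
`T(a₀⊗a₁⊗⋯⊗a_n) = (−1)^{n(n+1)/2} a₀^⋆ ⊗ a_n^⋆ ⊗ a_{n-1}^⋆ ⊗ ⋯ ⊗ a₁^⋆`
(the slot `j` of the result is `s (a (-j))`, negation taken in `Fin (n+1)`). -/
def IsStarReversal (k : Type*) {A : Type*} [CommRing k] [Ring A] [Algebra k A]
    (s : A →ₗ[k] A) (n : ℕ)
    (T : HochschildChains k A n →ₗ[k] HochschildChains k A n) : Prop :=
  ∀ a : Fin (n + 1) → A,
    T (PiTensorProduct.tprod k a) =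
      ((-1 : ℤ) ^ (n * (n + 1) / 2)) • PiTensorProduct.tprod k (fun j => s (a (-j)))

/-- All `n+2` faces of the Hochschild boundary bundled into one family. -/
def bigFace {A : Type*} [Mul A] (n : ℕ) (i : Fin (n + 2)) (a : Fin (n + 2) → A) :
    Fin (n + 1) → A :=
  if h : (i : ℕ) < n + 1 then hochFace n ⟨i, h⟩ a else hochCyc n a

theorem bigFace_castSucc {A : Type*} [Mul A] (n : ℕ) (i : Fin (n + 1)) (a : Fin (n + 2) → A) :
    bigFace n i.castSucc a = hochFace n i a := by
  rw [bigFace, dif_pos (show ((i.castSucc : Fin (n + 2)) : ℕ) < n + 1 by have := i.isLt; simp; omega)]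
  congr 1

theorem bigFace_last {A : Type*} [Mul A] (n : ℕ) (a : Fin (n + 2) → A) :
    bigFace n (Fin.last (n + 1)) a = hochCyc n a := by
  rw [bigFace, dif_neg (by simp)]

theorem bigFace_star {A : Type*} [Ring A] (s : A → A)
    (hmul : ∀ x y : A, s (x * y) = s y * s x)
    (n : ℕ) (a : Fin (n + 2) → A) (i : Fin (n + 2)) :
    bigFace n i (fun j => s (a (-j))) = fun j => s (bigFace n i.rev a (-j)) := by
  have negval : ∀ {m : ℕ} (x : Fin (m + 1)), x ≠ 0 →
      ((-x : Fin (m + 1)) : ℕ) = m + 1 - (x : ℕ) := by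
    intro m x hx
    rw [Fin.coe_neg]
    have hx' : 0 < (x : ℕ) := Fin.pos_of_ne_zero hx
    exact Nat.mod_eq_of_lt (by omega)
  have aeq : ∀ p q : Fin (n + 2), (p : ℕ) = (q : ℕ) → a p = a q :=
    fun p q h => congrArg a (Fin.ext h)
  have keyS : ∀ p q : Fin (n + 2), (p : ℕ) = (q : ℕ) → s (a p) = s (a q) :=
    fun p q h => congrArg s (aeq p q h)
  have keyM : ∀ p q p' q' : Fin (n + 2), (p : ℕ) = (q' : ℕ) → (q : ℕ) = (p' : ℕ) →
      s (a p) * s (a q) = s (a p' * a q') := by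
    intro p q p' q' h1 h2
    rw [hmul, aeq p q' h1, aeq q p' h2]
  have facedef : ∀ (c : Fin (n + 2) → A) (v : ℕ) (h : v < n + 1) (x : Fin (n + 1)),
      hochFace n ⟨v, h⟩ c x =
        if (x : ℕ) < v then c x.castSucc
        else if (x : ℕ) = v then c x.castSucc * c x.succ
        else c x.succ := fun _ _ _ _ => rfl
  have cycdef : ∀ (c : Fin (n + 2) → A) (x : Fin (n + 1)),
      hochCyc n c x =
        if (x : ℕ) = 0 then c (Fin.last (n + 1)) * c 0 else c x.castSucc := by
    intro c x
    simp only [hochCyc, Fin.ext_iff, Fin.val_zero]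
  have hrev : (i.rev : ℕ) = n + 1 - (i : ℕ) := by rw [Fin.val_rev]; omega
  have hi2 : (i : ℕ) < n + 2 := i.isLt
  funext j
  have hj1 : (j : ℕ) < n + 1 := j.isLt
  have e3 : ((-(j.succ) : Fin (n + 2)) : ℕ) = n + 1 - (j : ℕ) := by
    rw [negval _ (Fin.succ_ne_zero j), Fin.val_succ]; omega
  have e5 : ((-(Fin.last (n + 1)) : Fin (n + 2)) : ℕ) = 1 := by
    rw [negval _ (by simp [Fin.ext_iff]), Fin.val_last]; omega
  have e6 : ((-1 : Fin (n + 2)) : ℕ) = n + 1 := Fin.coe_neg_one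
  simp only [bigFace]
  by_cases hj : (j : ℕ) = 0
  · have hj0 : j = 0 := Fin.ext hj
    subst hj0
    have e1 : ((-(0 : Fin (n + 1)) : Fin (n + 1)) : ℕ) = 0 := by simp
    have e2 : ((-((0 : Fin (n + 1)).castSucc) : Fin (n + 2)) : ℕ) = 0 := by simp
    by_cases hiL : (i : ℕ) < n + 1
    · by_cases hi0 : (i : ℕ) = 0
      · rw [dif_pos hiL, dif_neg (show ¬((i.rev : ℕ) < n + 1) by omega), facedef, cycdef]
        split_ifs
        all_goals try simp only [Fin.val_succ, Fin.coe_castSucc, Fin.val_zero, Fin.val_last, neg_zero] at *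
        all_goals first | (exfalso; omega) | exact keyS _ _ (by (try simp only [Fin.val_succ, Fin.coe_castSucc, Fin.val_zero, Fin.val_last, neg_zero]) <;> omega) | exact keyM _ _ _ _ (by (try simp only [Fin.val_succ, Fin.coe_castSucc, Fin.val_zero, Fin.val_last, neg_zero]) <;> omega) (by (try simp only [Fin.val_succ, Fin.coe_castSucc, Fin.val_zero, Fin.val_last, neg_zero]) <;> omega)
      · rw [dif_pos hiL, dif_pos (show (i.rev : ℕ) < n + 1 by omega), facedef, facedef]
        split_ifs
        all_goals try simp only [Fin.val_succ, Fin.coe_castSucc, Fin.val_zero, Fin.val_last, neg_zero] at *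
        all_goals first | (exfalso; omega) | exact keyS _ _ (by (try simp only [Fin.val_succ, Fin.coe_castSucc, Fin.val_zero, Fin.val_last, neg_zero]) <;> omega) | exact keyM _ _ _ _ (by (try simp only [Fin.val_succ, Fin.coe_castSucc, Fin.val_zero, Fin.val_last, neg_zero]) <;> omega) (by (try simp only [Fin.val_succ, Fin.coe_castSucc, Fin.val_zero, Fin.val_last, neg_zero]) <;> omega)
    · rw [dif_neg hiL, dif_pos (show (i.rev : ℕ) < n + 1 by omega), cycdef, facedef]
      split_ifs
      all_goals try simp only [Fin.val_succ, Fin.coe_castSucc, Fin.val_zero, Fin.val_last, neg_zero] at *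
      all_goals first | (exfalso; omega) | exact keyS _ _ (by (try simp only [Fin.val_succ, Fin.coe_castSucc, Fin.val_zero, Fin.val_last, neg_zero]) <;> omega) | exact keyM _ _ _ _ (by (try simp only [Fin.val_succ, Fin.coe_castSucc, Fin.val_zero, Fin.val_last, neg_zero]) <;> omega) (by (try simp only [Fin.val_succ, Fin.coe_castSucc, Fin.val_zero, Fin.val_last, neg_zero]) <;> omega)
  · have e1 : ((-j : Fin (n + 1)) : ℕ) = n + 1 - (j : ℕ) := by
      rw [negval _ (fun h => hj (by simp [h]))]
    have e2 : ((-(j.castSucc) : Fin (n + 2)) : ℕ) = n + 2 - (j : ℕ) := by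
      rw [negval _ (fun h => hj (by rw [Fin.ext_iff, Fin.coe_castSucc, Fin.val_zero] at h; exact h)), Fin.coe_castSucc]
    by_cases hiL : (i : ℕ) < n + 1
    · by_cases hi0 : (i : ℕ) = 0
      · rw [dif_pos hiL, dif_neg (show ¬((i.rev : ℕ) < n + 1) by omega), facedef, cycdef]
        split_ifs
        all_goals try simp only [Fin.val_succ, Fin.coe_castSucc, Fin.val_zero, Fin.val_last, neg_zero] at *
        all_goals first | (exfalso; omega) | exact keyS _ _ (by (try simp only [Fin.val_succ, Fin.coe_castSucc, Fin.val_zero, Fin.val_last, neg_zero]) <;> omega) | exact keyM _ _ _ _ (by (try simp only [Fin.val_succ, Fin.coe_castSucc, Fin.val_zero, Fin.val_last, neg_zero]) <;> omega) (by (try simp only [Fin.val_succ, Fin.coe_castSucc, Fin.val_zero, Fin.val_last, neg_zero]) <;> omega)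
      · rw [dif_pos hiL, dif_pos (show (i.rev : ℕ) < n + 1 by omega), facedef, facedef]
        split_ifs
        all_goals try simp only [Fin.val_succ, Fin.coe_castSucc, Fin.val_zero, Fin.val_last, neg_zero] at *
        all_goals first | (exfalso; omega) | exact keyS _ _ (by (try simp only [Fin.val_succ, Fin.coe_castSucc, Fin.val_zero, Fin.val_last, neg_zero]) <;> omega) | exact keyM _ _ _ _ (by (try simp only [Fin.val_succ, Fin.coe_castSucc, Fin.val_zero, Fin.val_last, neg_zero]) <;> omega) (by (try simp only [Fin.val_succ, Fin.coe_castSucc, Fin.val_zero, Fin.val_last, neg_zero]) <;> omega)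
    · rw [dif_neg hiL, dif_pos (show (i.rev : ℕ) < n + 1 by omega), cycdef, facedef]
      split_ifs
      all_goals try simp only [Fin.val_succ, Fin.coe_castSucc, Fin.val_zero, Fin.val_last, neg_zero] at *
      all_goals first | (exfalso; omega) | exact keyS _ _ (by (try simp only [Fin.val_succ, Fin.coe_castSucc, Fin.val_zero, Fin.val_last, neg_zero]) <;> omega) | exact keyM _ _ _ _ (by (try simp only [Fin.val_succ, Fin.coe_castSucc, Fin.val_zero, Fin.val_last, neg_zero]) <;> omega) (by (try simp only [Fin.val_succ, Fin.coe_castSucc, Fin.val_zero, Fin.val_last, neg_zero]) <;> omega)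

theorem neg_one_pow_congr' {p q : ℕ} (h : p % 2 = q % 2) : ((-1 : ℤ)) ^ p = (-1) ^ q := by
  rcases Nat.even_or_odd p with hp | hp
  · have hp' := Nat.even_iff.mp hp
    rw [hp.neg_one_pow, (Nat.even_iff.mpr (by omega : q % 2 = 0)).neg_one_pow]
  · have hp' := Nat.odd_iff.mp hp
    rw [hp.neg_one_pow, (Nat.odd_iff.mpr (by omega : q % 2 = 1)).neg_one_pow]

theorem hochschild_boundary_comm_star_reversal
    {k A : Type*} [CommRing k] [Ring A] [Algebra k A]
    (s : A →ₗ[k] A)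
    (hmul : ∀ x y : A, s (x * y) = s y * s x)
    (hinv : ∀ x : A, s (s x) = x)
    (hone : s 1 = 1)
    (n : ℕ)
    (b : HochschildChains k A (n + 1) →ₗ[k] HochschildChains k A n)
    (hb : IsHochschildBoundary k n b)
    (T₁ : HochschildChains k A (n + 1) →ₗ[k] HochschildChains k A (n + 1))
    (hT₁ : IsStarReversal k s (n + 1) T₁)
    (T₀ : HochschildChains k A n →ₗ[k] HochschildChains k A n)
    (hT₀ : IsStarReversal k s n T₀) :
    b ∘ₗ T₁ = T₀ ∘ₗ b := by
  apply PiTensorProduct.ext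
  apply MultilinearMap.ext
  intro a
  simp only [LinearMap.compMultilinearMap_apply, LinearMap.coe_comp, Function.comp_apply]
  have hT₀' : ∀ c : Fin (n + 1) → A, T₀ (PiTensorProduct.tprod k c) =
      ((-1 : ℤ) ^ (n * (n + 1) / 2)) • PiTensorProduct.tprod k (fun j => s (c (-j))) := hT₀
  rw [hT₁ a, map_zsmul, hb (fun j => s (a (-j))), hb a, map_add, map_sum]
  simp only [map_zsmul, hT₀']
  have smulSum : ∀ (z : ℤ) (F : Fin (n + 1) → HochschildChains k A n),
      z • (∑ i, F i) = ∑ i, z • F i := fun z F =>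
    map_sum (AddMonoidHom.mk' (fun x => z • x) (fun x y => zsmul_add x y z)) F Finset.univ
  rw [zsmul_add, smulSum]
  simp only [smul_smul]
  simp only [← bigFace_castSucc, ← bigFace_last]
  have merge : ∀ (c : ℕ → ℤ) (f : Fin (n + 2) → HochschildChains k A n),
      (∑ i : Fin (n + 1), c (i : ℕ) • f i.castSucc) + c (n + 1) • f (Fin.last (n + 1))
        = ∑ i : Fin (n + 2), c (i : ℕ) • f i := by
    intro c f
    conv_rhs => rw [Fin.sum_univ_castSucc]
    simp only [Fin.coe_castSucc, Fin.val_last]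
  rw [merge (fun m => (-1 : ℤ) ^ ((n + 1) * (n + 1 + 1) / 2) * (-1) ^ m)
        (fun i => PiTensorProduct.tprod k (bigFace n i fun j => s (a (-j)))),
      merge (fun m => (-1 : ℤ) ^ m * (-1) ^ (n * (n + 1) / 2))
        (fun i => PiTensorProduct.tprod k (fun j => s (bigFace n i a (-j)))),
      ← Equiv.sum_comp Fin.revPerm
        (fun i => ((-1 : ℤ) ^ ((n + 1) * (n + 1 + 1) / 2) * (-1) ^ (i : ℕ)) •
          PiTensorProduct.tprod k (bigFace n i fun j => s (a (-j))))]
  apply Finset.sum_congr rfl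
  intro i _
  simp only [Fin.revPerm_apply]
  rw [bigFace_star (⇑s) hmul n a i.rev, Fin.rev_rev]
  have hscalar : (-1 : ℤ) ^ ((n + 1) * (n + 1 + 1) / 2) * (-1) ^ ((i.rev : ℕ))
      = (-1 : ℤ) ^ (i : ℕ) * (-1) ^ (n * (n + 1) / 2) := by
    have hrev : (i.rev : ℕ) = n + 1 - (i : ℕ) := by rw [Fin.val_rev]; omega
    have hi2 : (i : ℕ) < n + 2 := i.isLt
    obtain ⟨c, hc⟩ := Nat.even_mul_succ_self n
    have h12 : (n + 1) * (n + 1 + 1) = n * (n + 1) + 2 * (n + 1) := by ring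
    rw [hrev, ← pow_add, ← pow_add]
    apply neg_one_pow_congr'
    rw [h12, hc]
    omega
  rw [hscalar]
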